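/- arXiv:1612.07312 — 2 statements merged into one kernel-verified Lean document; each statement's English description precedes it below -/
import Mathlib

section
/- The identity operator on ℓ∞, viewed as an operator in L(C(βℕ), L(ℓ₁, 𝕂)) via C(βℕ) = ℓ∞ and L(ℓ₁,𝕂) = ℓ∞, is not weakly compact, yet its representing measure m : Σ → L(ℓ₁, 𝕂**) takes values in L(ℓ₁, 𝕂) = L(ℓ₁, 𝕂**). -/
open scoped ENNReal NNReal
open Set NormedSpace

set_option maxSynthPendingDepth 5

noncomputable section

instance : Fact ((1:ℝ≥0∞) ≤ ∞) := ⟨le_top⟩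

namespace Paper

/-- A finitely additive vector measure on the measurable sets. -/
def FinAdd {Ω Z : Type*} [MeasurableSpace Ω] [AddCommMonoid Z] (m : Set Ω → Z) : Prop :=
  m ∅ = 0 ∧ ∀ E F : Set Ω, MeasurableSet E → MeasurableSet F → Disjoint E F →
    m (E ∪ F) = m E + m F

/-- The semivariation `‖m‖(Ω)` of a vector measure: the supremum of
`‖∑ εᵢ • m Eᵢ‖` over finite measurable partitions of `Ω` and scalars `‖εᵢ‖ ≤ 1`. -/
def semivariation (𝕜 : Type*) {Ω Z : Type*} [RCLike 𝕜] [MeasurableSpace Ω]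
    [NormedAddCommGroup Z] [NormedSpace 𝕜 Z] (m : Set Ω → Z) : ℝ≥0∞ :=
  ⨆ (n : ℕ) (E : Fin n → Set Ω) (_ : ∀ i, MeasurableSet (E i))
    (_ : Pairwise (Function.onFun Disjoint E)) (_ : (⋃ i, E i) = Set.univ)
    (ε : Fin n → 𝕜) (_ : ∀ i, ‖ε i‖ ≤ 1),
    (‖∑ i, ε i • m (E i)‖₊ : ℝ≥0∞)

/-- The variation `|μ|(Ω)` of a vector measure. -/
def variation {Ω Z : Type*} [MeasurableSpace Ω] [NormedAddCommGroup Z] (m : Set Ω → Z) : ℝ≥0∞ :=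
  ⨆ (n : ℕ) (E : Fin n → Set Ω) (_ : ∀ i, MeasurableSet (E i))
    (_ : Pairwise (Function.onFun Disjoint E)) (_ : (⋃ i, E i) = Set.univ),
    ∑ i, (‖m (E i)‖₊ : ℝ≥0∞)

/-- The characteristic function of a set, as an element of the Banach space `ℓ∞(Ω, 𝕜)`
of bounded functions on `Ω`. -/
def indic (𝕜 : Type*) {Ω : Type*} [RCLike 𝕜] (E : Set Ω) : lp (fun _ : Ω => 𝕜) ∞ :=
  ⟨E.indicator (fun _ => 1), memℓp_infty ⟨1, by
    rintro r ⟨ω, rfl⟩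
    by_cases h : ω ∈ E <;> simp [h]⟩⟩

/-- The space `B(Σ)` of bounded measurable functions: the closure in `ℓ∞(Ω, 𝕜)` of the span of
characteristic functions of measurable sets (i.e. the uniform closure of simple functions). -/
def BSigma (Ω 𝕜 : Type*) [MeasurableSpace Ω] [RCLike 𝕜] : Submodule 𝕜 (lp (fun _ : Ω => 𝕜) ∞) :=
  (Submodule.span 𝕜 (indic 𝕜 '' {E : Set Ω | MeasurableSet E})).topologicalClosure

lemma indic_mem {Ω 𝕜 : Type*} [MeasurableSpace Ω] [RCLike 𝕜] {E : Set Ω}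
    (hE : MeasurableSet E) : indic 𝕜 E ∈ BSigma Ω 𝕜 :=
  Submodule.le_topologicalClosure _ (Submodule.subset_span ⟨E, hE, rfl⟩)

/-- A continuous function on a compact space, as an element of `ℓ∞(Ω, 𝕜)`. -/
def cToB {Ω 𝕜 : Type*} [TopologicalSpace Ω] [CompactSpace Ω] [RCLike 𝕜]
    (φ : C(Ω, 𝕜)) : lp (fun _ : Ω => 𝕜) ∞ :=
  ⟨fun ω => φ ω, memℓp_infty (isCompact_range ((map_continuous φ).norm)).bddAbove⟩

/-- `m` is a representing measure of `S ∈ L(C(Ω), Z')`, relative to the embedding `e : Z' → Z`: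
`m` is a finitely additive vector measure of bounded semivariation, and the elementary Bartle
integration operator `T` of `m` on `B(Σ)` (the unique continuous linear operator sending the
characteristic function of a measurable set `E` to `m E`) satisfies `∫ φ dm = e (S φ)` for every
continuous `φ`. -/
def Represents {Ω 𝕜 Z Z' : Type*} [TopologicalSpace Ω] [CompactSpace Ω] [MeasurableSpace Ω]
    [RCLike 𝕜] [NormedAddCommGroup Z] [NormedSpace 𝕜 Z] [NormedAddCommGroup Z']
    [NormedSpace 𝕜 Z'] (m : Set Ω → Z) (e : Z' →L[𝕜] Z) (S : C(Ω, 𝕜) →L[𝕜] Z') : Prop :=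
  FinAdd m ∧ semivariation 𝕜 m < ⊤ ∧
    ∃ T : (BSigma Ω 𝕜) →L[𝕜] Z,
      (∀ (E : Set Ω) (hE : MeasurableSet E), T ⟨indic 𝕜 E, indic_mem hE⟩ = m E) ∧
      ∀ φ : C(Ω, 𝕜), ∃ hφ : cToB φ ∈ BSigma Ω 𝕜, T ⟨cToB φ, hφ⟩ = e (S φ)

/-- The canonical embedding `J : L(X,Y) → L(X,Y**)`, `J A = j_Y ∘ A`. -/
def Jmap (𝕜 X Y : Type*) [RCLike 𝕜] [NormedAddCommGroup X] [NormedSpace 𝕜 X]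
    [NormedAddCommGroup Y] [NormedSpace 𝕜 Y] :
    (X →L[𝕜] Y) →L[𝕜] (X →L[𝕜] StrongDual 𝕜 (StrongDual 𝕜 Y)) :=
  ContinuousLinearMap.compL 𝕜 X Y (StrongDual 𝕜 (StrongDual 𝕜 Y)) (inclusionInDoubleDual 𝕜 Y)

/-- For `y* ∈ Y*`, the map `L(X,Y**) → X*` sending `A` to the functional `x ↦ ⟨y*, A x⟩`;
applied to a vector measure `m` it produces the measures `m_{y*} = (m(·))* y*`. -/
def lam {𝕜 X Y : Type*} [RCLike 𝕜] [NormedAddCommGroup X] [NormedSpace 𝕜 X]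
    [NormedAddCommGroup Y] [NormedSpace 𝕜 Y] (g : StrongDual 𝕜 Y) :
    (X →L[𝕜] StrongDual 𝕜 (StrongDual 𝕜 Y)) →L[𝕜] StrongDual 𝕜 X :=
  ContinuousLinearMap.compL 𝕜 X (StrongDual 𝕜 (StrongDual 𝕜 Y)) 𝕜 (ContinuousLinearMap.apply 𝕜 𝕜 g)


/-- A weakly compact operator: the image of the closed unit ball is contained in a
weakly compact subset of the target. -/
def WeaklyCompactOp {𝕜 E F : Type*} [RCLike 𝕜] [NormedAddCommGroup E] [NormedSpace 𝕜 E]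
    [NormedAddCommGroup F] [NormedSpace 𝕜 F] (T : E →L[𝕜] F) : Prop :=
  ∃ K : Set (WeakSpace 𝕜 F), IsCompact K ∧
    toWeakSpaceCLM 𝕜 F '' (T '' Metric.closedBall 0 1) ⊆ K


section Aux

open Filter Topology

variable {𝕜 : Type*} [RCLike 𝕜]

/-- The standard basis vectors of `ℓ¹`. -/
def ev1 (𝕜 : Type*) [RCLike 𝕜] (k : ℕ) : lp (fun _ : ℕ => 𝕜) 1 := lp.single 1 k (1 : 𝕜)

lemma norm_ev1 (k : ℕ) : ‖ev1 𝕜 k‖ = 1 := by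
  have h := lp.norm_single (p := 1) (E := fun _ : ℕ => 𝕜) (by norm_num) k (1 : 𝕜)
  simpa [ev1] using h

lemma uLim_exists (U : Ultrafilter ℕ) {c : ℕ → 𝕜} {C : ℝ} (hC : ∀ k, ‖c k‖ ≤ C) :
    ∃ x : 𝕜, Filter.Tendsto c U (nhds x) ∧ ‖x‖ ≤ C := by
  haveI : ProperSpace 𝕜 := FiniteDimensional.proper_rclike 𝕜 𝕜
  have hcomp : IsCompact (Metric.closedBall (0 : 𝕜) C) := isCompact_closedBall _ _
  have hle : (U.map c : Filter 𝕜) ≤ Filter.principal (Metric.closedBall (0 : 𝕜) C) := by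
    refine Filter.le_principal_iff.mpr ?_
    refine Filter.mem_map.mpr (Filter.univ_mem' fun k => ?_)
    simpa [Metric.mem_closedBall, dist_zero_right] using hC k
  obtain ⟨x, hx, hU⟩ := hcomp.ultrafilter_le_nhds (U.map c) hle
  refine ⟨x, ?_, by simpa [Metric.mem_closedBall, dist_zero_right] using hx⟩
  exact hU

/-- The sequence of values of an operator `A ∈ L(ℓ¹, 𝕜)` on the basis vectors. -/
def uLimSeq (A : lp (fun _ : ℕ => 𝕜) 1 →L[𝕜] 𝕜) : ℕ → 𝕜 := fun k => A (ev1 𝕜 k)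

lemma uLimSeq_bound (A : lp (fun _ : ℕ => 𝕜) 1 →L[𝕜] 𝕜) (k : ℕ) : ‖uLimSeq A k‖ ≤ ‖A‖ := by
  simpa [uLimSeq, norm_ev1] using A.le_opNorm (ev1 𝕜 k)

/-- The generalized (Banach) limit, along an ultrafilter `U`, of the values of an operator
`A ∈ L(ℓ¹, 𝕜)` on the standard basis vectors. -/
def uLimVal (U : Ultrafilter ℕ) (A : lp (fun _ : ℕ => 𝕜) 1 →L[𝕜] 𝕜) : 𝕜 :=
  (uLim_exists U (uLimSeq_bound A)).choose

lemma uLimVal_tendsto (U : Ultrafilter ℕ) (A : lp (fun _ : ℕ => 𝕜) 1 →L[𝕜] 𝕜) :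
    Filter.Tendsto (uLimSeq A) U (nhds (uLimVal U A)) :=
  (uLim_exists U (uLimSeq_bound A)).choose_spec.1

lemma uLimVal_norm (U : Ultrafilter ℕ) (A : lp (fun _ : ℕ => 𝕜) 1 →L[𝕜] 𝕜) :
    ‖uLimVal U A‖ ≤ ‖A‖ :=
  (uLim_exists U (uLimSeq_bound A)).choose_spec.2

/-- The generalized-limit functional on `L(ℓ¹, 𝕜)`. -/
def banachLimit (U : Ultrafilter ℕ) : (lp (fun _ : ℕ => 𝕜) 1 →L[𝕜] 𝕜) →L[𝕜] 𝕜 :=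
  LinearMap.mkContinuous
    { toFun := uLimVal U
      map_add' := fun A B => by
        refine tendsto_nhds_unique (uLimVal_tendsto U (A + B)) ?_
        refine ((uLimVal_tendsto U A).add (uLimVal_tendsto U B)).congr fun k => ?_
        simp [uLimSeq]
      map_smul' := fun c A => by
        refine tendsto_nhds_unique (uLimVal_tendsto U (c • A)) ?_
        refine ((uLimVal_tendsto U A).const_smul c).congr fun k => ?_
        simp [uLimSeq] }
    1 (fun A => by simpa using uLimVal_norm U A)

lemma banachLimit_eq (U : Ultrafilter ℕ) (A : lp (fun _ : ℕ => 𝕜) 1 →L[𝕜] 𝕜) {x : 𝕜}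
    (h : Filter.Tendsto (fun k => A (ev1 𝕜 k)) U (nhds x)) : banachLimit U A = x :=
  tendsto_nhds_unique (uLimVal_tendsto U A) h

end Aux

set_option maxHeartbeats 2000000

/-- The identity on `ℓ∞`, viewed via `C(βℕ) = ℓ∞` and `L(ℓ₁,𝕜) = ℓ∞` as an operator
`S ∈ L(C(βℕ), L(ℓ₁,𝕜))`, is not weakly compact, yet every representing measure of `S`
takes its values in `L(ℓ₁,𝕜) = L(ℓ₁,𝕜**)`. -/
theorem statement8 {Ω 𝕜 : Type*} [TopologicalSpace Ω] [CompactSpace Ω] [T2Space Ω] [MeasurableSpace Ω] [BorelSpace Ω] [RCLike 𝕜]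
    (e : C(Ω, 𝕜) ≃ₗᵢ[𝕜] lp (fun _ : ℕ => 𝕜) ∞)
    (D : lp (fun _ : ℕ => 𝕜) ∞ →L[𝕜] (lp (fun _ : ℕ => 𝕜) 1 →L[𝕜] 𝕜))
    (hD : ∀ (f : lp (fun _ : ℕ => 𝕜) ∞) (v : lp (fun _ : ℕ => 𝕜) 1),
      D f v = ∑' n, f n * v n) :
    ¬ WeaklyCompactOp (D.comp e.toContinuousLinearEquiv.toContinuousLinearMap) ∧
    ∀ m : Set Ω → (lp (fun _ : ℕ => 𝕜) 1 →L[𝕜] StrongDual 𝕜 (StrongDual 𝕜 𝕜)),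
      Represents m (Jmap 𝕜 (lp (fun _ : ℕ => 𝕜) 1) 𝕜)
        (D.comp e.toContinuousLinearEquiv.toContinuousLinearMap) →
      ∀ E : Set Ω, MeasurableSet E → ∃ A : lp (fun _ : ℕ => 𝕜) 1 →L[𝕜] 𝕜,
        m E = Jmap 𝕜 (lp (fun _ : ℕ => 𝕜) 1) 𝕜 A := by
  classical
  set F := (lp (fun _ : ℕ => 𝕜) 1 →L[𝕜] 𝕜) with hF
  set T := D.comp e.toContinuousLinearEquiv.toContinuousLinearMap with hT
  constructor
  · rintro ⟨K, hK, hsub⟩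
    set Fn : ℕ → lp (fun _ : ℕ => 𝕜) ∞ := fun n => indic 𝕜 {k : ℕ | k < n} with hFn
    set x : ℕ → C(Ω, 𝕜) := fun n => e.symm (Fn n) with hx
    have hTx : ∀ n, T (x n) = D (Fn n) := by
      intro n
      simp [hT, hx, ContinuousLinearMap.comp_apply]
    have hxball : ∀ n, x n ∈ Metric.closedBall (0 : C(Ω, 𝕜)) 1 := by
      intro n
      rw [Metric.mem_closedBall, dist_zero_right, hx]
      rw [show ‖e.symm (Fn n)‖ = ‖Fn n‖ from e.symm.norm_map (Fn n)]
      refine lp.norm_le_of_forall_le zero_le_one fun i => ?_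
      by_cases h : i < n <;> simp [hFn, indic, Set.indicator_apply, h]
    set w : ℕ → WeakSpace 𝕜 F := fun n => toWeakSpaceCLM 𝕜 F (T (x n)) with hw
    have hwK : ∀ n, w n ∈ K := fun n => hsub ⟨T (x n), ⟨x n, hxball n, rfl⟩, rfl⟩
    haveI : Filter.NeBot (Filter.map w (Filter.atTop : Filter ℕ)) := Filter.NeBot.map Filter.atTop_neBot w
    obtain ⟨z, hzK, hz⟩ := hK.exists_clusterPt (f := Filter.map w Filter.atTop) (Filter.le_principal_iff.mpr
      (Filter.mem_map.mpr (Filter.univ_mem' hwK)))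
    set z' : F := (toWeakSpace 𝕜 F).symm z with hz'
    have key : ∀ (g : StrongDual 𝕜 F) (c : 𝕜),
        Filter.Tendsto (fun n => g (T (x n))) Filter.atTop (nhds c) → g z' = c := by
      intro g c hgc
      have hcont : Continuous fun y : WeakSpace 𝕜 F => g ((toWeakSpace 𝕜 F).symm y) :=
        WeakBilin.eval_continuous ((topDualPairing 𝕜 F).flip) g
      have h1 : ClusterPt (g z') (Filter.map (fun y : WeakSpace 𝕜 F =>
          g ((toWeakSpace 𝕜 F).symm y)) (Filter.map w Filter.atTop)) :=
        hz.map hcont.continuousAt Filter.tendsto_map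
      rw [Filter.map_map] at h1
      have h3 : Filter.map ((fun y : WeakSpace 𝕜 F => g ((toWeakSpace 𝕜 F).symm y)) ∘ w)
          Filter.atTop = Filter.map (fun n => g (T (x n))) Filter.atTop := rfl
      rw [h3] at h1
      exact eq_of_nhds_neBot (h1.mono hgc)
    have hD' : ∀ (f : lp (fun _ : ℕ => 𝕜) ∞) (k : ℕ), D f (ev1 𝕜 k) = f k := by
      intro f k
      rw [hD, tsum_eq_single k]
      · simp [ev1, lp.single_apply_self]
      · intro j hj
        simp [ev1, lp.single_apply_ne 1 k _ hj, Pi.single_apply, hj]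
    have hFnk : ∀ n k, (Fn n : ∀ _ : ℕ, 𝕜) k = if k < n then (1 : 𝕜) else 0 := by
      intro n k; simp [hFn, indic, Set.indicator_apply]
    have hz1 : ∀ k, z' (ev1 𝕜 k) = 1 := by
      intro k
      refine key (ContinuousLinearMap.apply 𝕜 𝕜 (ev1 𝕜 k)) 1 ?_
      have hev : (fun _ : ℕ => (1 : 𝕜)) =ᶠ[Filter.atTop] fun n =>
          (ContinuousLinearMap.apply 𝕜 𝕜 (ev1 𝕜 k)) (T (x n)) := by
        refine Filter.eventually_atTop.mpr ⟨k + 1, fun n hn => ?_⟩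
        have h5 : (T (x n)) (ev1 𝕜 k) = (1 : 𝕜) := by
          rw [hTx, hD' (Fn n) k, hFnk]
          simp [Nat.lt_of_succ_le hn]
        simpa using h5.symm
      exact tendsto_const_nhds.congr' hev
    set U : Ultrafilter ℕ := Filter.hyperfilter ℕ with hU
    set φ : StrongDual 𝕜 F := banachLimit U with hφ
    have h0 : ∀ n, φ (T (x n)) = 0 := by
      intro n
      refine banachLimit_eq U (T (x n)) ?_
      have hev : (fun _ : ℕ => (0 : 𝕜)) =ᶠ[(U : Filter ℕ)] fun k => (T (x n)) (ev1 𝕜 k) := by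
        have hcof : {k : ℕ | n ≤ k} ∈ (Filter.cofinite : Filter ℕ) := by
          have : {k : ℕ | n ≤ k}ᶜ = {k : ℕ | k < n} := by
            ext k; simp [Nat.not_le]
          rw [Filter.mem_cofinite, this]
          exact Set.finite_lt_nat n
        filter_upwards [Filter.hyperfilter_le_cofinite hcof] with k hk
        rw [hTx, hD' (Fn n) k, hFnk]
        simp [Nat.not_lt.mpr hk]
      exact tendsto_const_nhds.congr' hev
    have hφ0 : φ z' = 0 :=
      key φ 0 ((Filter.tendsto_congr fun n => (h0 n).symm).mp tendsto_const_nhds)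
    have hφ1 : φ z' = 1 :=
      banachLimit_eq U z' ((Filter.tendsto_congr fun k => (hz1 k).symm).mp tendsto_const_nhds)
    exact zero_ne_one (hφ0.symm.trans hφ1)
  · intro m _ E _
    refine ⟨(ContinuousLinearMap.apply 𝕜 𝕜 (ContinuousLinearMap.id 𝕜 𝕜)).comp (m E), ?_⟩
    ext v g
    have hg : g = g 1 • ContinuousLinearMap.id 𝕜 𝕜 := by
      ext
      simp [mul_comm]
    calc (m E) v g = (m E) v (g 1 • ContinuousLinearMap.id 𝕜 𝕜) := by rw [← hg]
      _ = g 1 * (m E) v (ContinuousLinearMap.id 𝕜 𝕜) := by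
          rw [map_smul]; simp [smul_eq_mul]
      _ = g ((m E) v (ContinuousLinearMap.id 𝕜 𝕜)) := by
          conv_rhs => rw [hg]
          simp [smul_eq_mul, mul_comm]
      _ = Jmap 𝕜 (lp (fun _ : ℕ => 𝕜) 1) 𝕜
            ((ContinuousLinearMap.apply 𝕜 𝕜 (ContinuousLinearMap.id 𝕜 𝕜)).comp (m E)) v g := by
          simp [Jmap, ContinuousLinearMap.compL_apply, ContinuousLinearMap.comp_apply,
            NormedSpace.dual_def]

end Paper
end
end

section
/- For 1 ≤ p ≤ ∞ the space C_p(Ω,X) = C(Ω) ⊗̂_{d_p} X is (isometrically) a closed subspace of B(Σ) ⊗̂_{d_p} X, because C(Ω) is an ideal in B(Σ) (being an L₁-predual) and tensoring an ideal with the Chevet–Saphar norm d_p preserves the subspace embedding. -/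
open scoped ENNReal NNReal
open Set NormedSpace

set_option maxSynthPendingDepth 5

noncomputable section

namespace Paper

/-- The (strong) `ℓ_p` norm of a finite family of vectors. -/
def lpNorm (p : ℝ≥0∞) {E : Type*} [NormedAddCommGroup E] {n : ℕ} (x : Fin n → E) : ℝ≥0∞ :=
  if p = ∞ then ⨆ i, (‖x i‖₊ : ℝ≥0∞)
  else (∑ i, (‖x i‖₊ : ℝ≥0∞) ^ p.toReal) ^ (1 / p.toReal)

/-- The weak `ℓ_p` norm `‖(xᵢ)‖_p^w = sup_{‖f‖≤1} (∑ |f xᵢ|^p)^{1/p}` of a finite family. -/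
def weakNorm (𝕜 : Type*) (p : ℝ≥0∞) {E : Type*} [RCLike 𝕜] [NormedAddCommGroup E]
    [NormedSpace 𝕜 E] {n : ℕ} (x : Fin n → E) : ℝ≥0∞ :=
  ⨆ (f : StrongDual 𝕜 E) (_ : ‖f‖ ≤ 1), lpNorm p (fun i => f (x i))

open scoped TensorProduct in
/-- The right Chevet–Saphar norm `d_p` of a tensor `u ∈ Z ⊗ X`:
`d_p(u) = inf ‖(zᵢ)‖^w_{p'} · ‖(xᵢ)‖_p` over all finite representations `u = ∑ zᵢ ⊗ xᵢ`. -/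
def dpNorm (𝕜 : Type*) (p p' : ℝ≥0∞) {Z X : Type*} [RCLike 𝕜]
    [NormedAddCommGroup Z] [NormedSpace 𝕜 Z] [NormedAddCommGroup X] [NormedSpace 𝕜 X]
    (u : Z ⊗[𝕜] X) : ℝ≥0∞ :=
  ⨅ (n : ℕ) (z : Fin n → Z) (x : Fin n → X) (_ : u = ∑ i, z i ⊗ₜ[𝕜] x i),
    weakNorm 𝕜 p' z * lpNorm p x


section AuxNorm

variable {𝕜 : Type*} [RCLike 𝕜] {E F : Type*} [NormedAddCommGroup E] [NormedSpace 𝕜 E]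
  [NormedAddCommGroup F] [NormedSpace 𝕜 F] {p : ℝ≥0∞}

lemma toReal_one_le (hp : 1 ≤ p) (htop : p ≠ ∞) : 1 ≤ p.toReal := by
  simpa using ENNReal.toReal_mono htop hp

lemma sum_rpow_le_rpow_sum {n : ℕ} (a : Fin n → ℝ≥0∞) {r : ℝ} (hr : 1 ≤ r) :
    ∑ i, a i ^ r ≤ (∑ i, a i) ^ r := by
  have hr0 : 0 < r := lt_of_lt_of_le one_pos hr
  classical
  induction (Finset.univ : Finset (Fin n)) using Finset.induction with
  | empty => simp [ENNReal.zero_rpow_of_pos hr0]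
  | insert _ _ hx ih =>
    rw [Finset.sum_insert hx, Finset.sum_insert hx]
    exact le_trans (add_le_add_right ih _) (ENNReal.add_rpow_le_rpow_add _ _ hr)

lemma lpNorm_le_sum (hp : 1 ≤ p) {n : ℕ} (v : Fin n → E) :
    lpNorm p v ≤ ∑ i, (‖v i‖₊ : ℝ≥0∞) := by
  unfold lpNorm
  split_ifs with h
  · exact iSup_le fun i => Finset.single_le_sum (f := fun i => (‖v i‖₊ : ℝ≥0∞))
      (fun i _ => zero_le) (Finset.mem_univ i)
  · have hr : 1 ≤ p.toReal := toReal_one_le hp h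
    have hr0 : p.toReal ≠ 0 := by positivity
    calc (∑ i, (‖v i‖₊ : ℝ≥0∞) ^ p.toReal) ^ (1 / p.toReal)
        ≤ ((∑ i, (‖v i‖₊ : ℝ≥0∞)) ^ p.toReal) ^ (1 / p.toReal) :=
          ENNReal.rpow_le_rpow (sum_rpow_le_rpow_sum _ hr) (by positivity)
      _ = ∑ i, (‖v i‖₊ : ℝ≥0∞) := by
          rw [← ENNReal.rpow_mul, mul_one_div, div_self hr0, ENNReal.rpow_one]

lemma le_lpNorm (hp : 1 ≤ p) {n : ℕ} (v : Fin n → E) (i : Fin n) :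
    (‖v i‖₊ : ℝ≥0∞) ≤ lpNorm p v := by
  unfold lpNorm
  split_ifs with h
  · exact le_iSup (fun i => (‖v i‖₊ : ℝ≥0∞)) i
  · have hr : 1 ≤ p.toReal := toReal_one_le hp h
    have hr0 : p.toReal ≠ 0 := by positivity
    calc (‖v i‖₊ : ℝ≥0∞) = (((‖v i‖₊ : ℝ≥0∞)) ^ p.toReal) ^ (1 / p.toReal) := by
          rw [← ENNReal.rpow_mul, mul_one_div, div_self hr0, ENNReal.rpow_one]
      _ ≤ _ := ENNReal.rpow_le_rpow (Finset.single_le_sum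
            (f := fun i => (‖v i‖₊ : ℝ≥0∞) ^ p.toReal) (fun i _ => zero_le)
            (Finset.mem_univ i)) (by positivity)

lemma lpNorm_append_le (hp : 1 ≤ p) {n k : ℕ} (a : Fin n → E) (b : Fin k → E) :
    lpNorm p (Fin.append a b) ≤ lpNorm p a + lpNorm p b := by
  unfold lpNorm
  split_ifs with h
  · refine iSup_le fun i => ?_
    refine Fin.addCases (fun j => ?_) (fun j => ?_) i
    · rw [Fin.append_left]
      exact le_trans (le_iSup (fun j => (‖a j‖₊ : ℝ≥0∞)) j) le_self_add
    · rw [Fin.append_right]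
      exact le_trans (le_iSup (fun j => (‖b j‖₊ : ℝ≥0∞)) j) le_add_self
  · have hr : 1 ≤ p.toReal := toReal_one_le hp h
    have hr0 : 0 < p.toReal := lt_of_lt_of_le one_pos hr
    rw [Fin.sum_univ_add]
    simp only [Fin.append_left, Fin.append_right]
    exact ENNReal.rpow_add_le_add_rpow _ _ (by positivity) (by
      rw [div_le_one hr0]; exact hr)

lemma lpNorm_fin_zero (hp : 1 ≤ p) (v : Fin 0 → E) : lpNorm p v = 0 := by
  unfold lpNorm
  split_ifs with h
  · simp
  · have hr : 1 ≤ p.toReal := toReal_one_le hp h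
    have hr0 : (0:ℝ) < 1 / p.toReal := by positivity
    simp only [Finset.univ_eq_empty, Finset.sum_empty]
    exact ENNReal.zero_rpow_of_pos hr0

lemma lpNorm_eq_zero (hp : 1 ≤ p) {n : ℕ} {v : Fin n → E}
    (h : lpNorm p v = 0) (i : Fin n) : v i = 0 := by
  have h2 := le_lpNorm hp v i
  rw [h, le_zero_iff, ENNReal.coe_eq_zero, nnnorm_eq_zero] at h2
  exact h2

end AuxNorm
section AuxWeak

variable {𝕜 : Type*} [RCLike 𝕜] {E F : Type*} [NormedAddCommGroup E] [NormedSpace 𝕜 E]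
  [NormedAddCommGroup F] [NormedSpace 𝕜 F] {p p' : ℝ≥0∞}

lemma le_weakNorm {n : ℕ} (v : Fin n → E) (f : StrongDual 𝕜 E) (hf : ‖f‖ ≤ 1) :
    lpNorm p' (fun i => f (v i)) ≤ weakNorm 𝕜 p' v :=
  le_iSup₂ (f := fun (f : StrongDual 𝕜 E) (_ : ‖f‖ ≤ 1) =>
    lpNorm p' (fun i => f (v i))) f hf

lemma weakNorm_le {n : ℕ} (v : Fin n → E) (c : ℝ≥0∞)
    (h : ∀ f : StrongDual 𝕜 E, ‖f‖ ≤ 1 → lpNorm p' (fun i => f (v i)) ≤ c) :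
    weakNorm 𝕜 p' v ≤ c :=
  iSup₂_le h

lemma weakNorm_append_le (hp' : 1 ≤ p') {n k : ℕ} (a : Fin n → E) (b : Fin k → E) :
    weakNorm 𝕜 p' (Fin.append a b) ≤ weakNorm 𝕜 p' a + weakNorm 𝕜 p' b := by
  refine weakNorm_le _ _ fun f hf => ?_
  have hcomp : (fun i => f (Fin.append a b i)) =
      Fin.append (fun i => f (a i)) (fun i => f (b i)) := by
    funext i
    refine Fin.addCases (fun j => ?_) (fun j => ?_) i <;>
      simp [Fin.append_left, Fin.append_right]
  rw [hcomp]
  exact le_trans (lpNorm_append_le hp' _ _)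
    (add_le_add (le_weakNorm a f hf) (le_weakNorm b f hf))

lemma weakNorm_le_sum (hp' : 1 ≤ p') {n : ℕ} (v : Fin n → E) :
    weakNorm 𝕜 p' v ≤ ∑ i, (‖v i‖₊ : ℝ≥0∞) := by
  refine weakNorm_le _ _ fun f hf => ?_
  refine le_trans (lpNorm_le_sum hp' _) (Finset.sum_le_sum fun i _ => ?_)
  have h1 : ‖f (v i)‖₊ ≤ ‖v i‖₊ := by
    refine le_trans (f.le_opNNNorm (v i)) ?_
    have : ‖f‖₊ ≤ 1 := hf
    calc ‖f‖₊ * ‖v i‖₊ ≤ 1 * ‖v i‖₊ := mul_le_mul_left this _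
      _ = ‖v i‖₊ := one_mul _
  exact_mod_cast h1

lemma weakNorm_comp_le {n : ℕ} (S : E →L[𝕜] F) (hS : ‖S‖ ≤ 1) (v : Fin n → E) :
    weakNorm 𝕜 p' (fun i => S (v i)) ≤ weakNorm 𝕜 p' v := by
  refine weakNorm_le _ _ fun f hf => ?_
  have hg : ‖f.comp S‖ ≤ 1 := by
    refine le_trans (f.opNorm_comp_le S) ?_
    calc ‖f‖ * ‖S‖ ≤ 1 * 1 := by
          exact mul_le_mul hf hS (norm_nonneg _) zero_le_one
      _ = 1 := one_mul _
  exact le_weakNorm v (f.comp S) hg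

lemma weakNorm_eq_zero (hp' : 1 ≤ p') {n : ℕ} {v : Fin n → E}
    (h : weakNorm 𝕜 p' v = 0) (i : Fin n) : v i = 0 := by
  by_contra hvi
  obtain ⟨g, hg1, hgv⟩ := exists_dual_vector 𝕜 (v i) (norm_ne_zero_iff.2 hvi)
  have h1 : lpNorm p' (fun j => g (v j)) ≤ 0 := h ▸ le_weakNorm v g hg1.le
  have h2 := le_trans (le_lpNorm hp' (fun j => g (v j)) i) h1
  rw [le_zero_iff, ENNReal.coe_eq_zero, nnnorm_eq_zero, hgv] at h2
  exact hvi (by simpa [norm_eq_zero] using h2)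

end AuxWeak

section AuxDp

variable {𝕜 : Type*} [RCLike 𝕜] {E X : Type*} [NormedAddCommGroup E] [NormedSpace 𝕜 E]
  [NormedAddCommGroup X] [NormedSpace 𝕜 X] {p p' : ℝ≥0∞}

open scoped TensorProduct

lemma dpNorm_le_rep {u : E ⊗[𝕜] X} {n : ℕ} {z : Fin n → E} {x : Fin n → X}
    (h : u = ∑ i, z i ⊗ₜ[𝕜] x i) :
    dpNorm 𝕜 p p' u ≤ weakNorm 𝕜 p' z * lpNorm p x := by
  exact iInf_le_of_le n (iInf_le_of_le z (iInf_le_of_le x (iInf_le_of_le h le_rfl)))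

lemma dpNorm_zero_le (hp : 1 ≤ p) : dpNorm 𝕜 p p' (0 : E ⊗[𝕜] X) ≤ 0 := by
  refine le_trans (dpNorm_le_rep (n := 0) (z := fun i => i.elim0) (x := fun i => i.elim0)
    (by simp)) ?_
  rw [lpNorm_fin_zero hp, mul_zero]

lemma exists_fin_rep (u : E ⊗[𝕜] X) :
    ∃ (n : ℕ) (z : Fin n → E) (x : Fin n → X), u = ∑ i, z i ⊗ₜ[𝕜] x i := by
  induction u with
  | zero => exact ⟨0, (fun i => i.elim0), (fun i => i.elim0), by simp⟩
  | tmul a b => exact ⟨1, (fun _ => a), (fun _ => b), by simp⟩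
  | add a b ha hb =>
    obtain ⟨n, z, x, hz⟩ := ha
    obtain ⟨m, w, y, hw⟩ := hb
    refine ⟨n + m, Fin.append z w, Fin.append x y, ?_⟩
    rw [Fin.sum_univ_add]
    simp only [Fin.append_left, Fin.append_right]
    rw [hz, hw]

end AuxDp
section AuxT

variable {Ω : Type*} [TopologicalSpace Ω] [CompactSpace Ω] [T2Space Ω] [MeasurableSpace Ω]
  {𝕜 : Type*} [RCLike 𝕜]

set_option maxHeartbeats 1000000 in
lemma exists_average_op {k : ℕ} (z : Fin k → C(Ω, 𝕜)) {η : ℝ} (hη : 0 < η) :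
    ∃ T : (BSigma Ω 𝕜) →L[𝕜] C(Ω, 𝕜), ‖T‖ ≤ 1 ∧
      ∀ (w : BSigma Ω 𝕜) (j : Fin k),
        (∀ ω, (↑w : lp (fun _ : Ω => 𝕜) ∞) ω = z j ω) → ‖T w - z j‖ ≤ η := by
  classical
  -- the cover by sets of small oscillation
  set U : Ω → Set Ω := fun ω₀ => {ω | ∀ j, ‖z j ω - z j ω₀‖ < η / 2} with hU
  have hUopen : ∀ ω₀, IsOpen (U ω₀) := by
    intro ω₀
    have : U ω₀ = ⋂ j, {ω | ‖z j ω - z j ω₀‖ < η / 2} := by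
      ext ω; simp [hU, Set.mem_iInter]
    rw [this]
    refine isOpen_iInter_of_finite fun j => ?_
    exact isOpen_lt (Continuous.norm ((z j).continuous.sub continuous_const)) continuous_const
  have hUmem : ∀ ω₀, ω₀ ∈ U ω₀ := fun ω₀ => by simp [hU, half_pos hη]
  have hcov : (Set.univ : Set Ω) ⊆ ⋃ ω₀, U ω₀ := fun ω _ =>
    Set.mem_iUnion.2 ⟨ω, hUmem ω⟩
  obtain ⟨s, hs⟩ := IsCompact.elim_finite_subcover isCompact_univ U hUopen hcov
  have hcov' : (Set.univ : Set Ω) ⊆ ⋃ i : s, U ↑i := by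
    intro ω hω
    obtain ⟨i, hi, h⟩ := Set.mem_iUnion₂.1 (hs hω)
    exact Set.mem_iUnion.2 ⟨⟨i, hi⟩, h⟩
  obtain ⟨ρ, hρ⟩ := PartitionOfUnity.exists_isSubordinate isClosed_univ
    (fun i : s => U ↑i) (fun i => hUopen _) hcov'
  have hsum : ∀ ω : Ω, ∑ i : s, ρ i ω = 1 := fun ω => by
    rw [← finsum_eq_sum_of_fintype]; exact ρ.sum_eq_one (Set.mem_univ ω)
  have hnn : ∀ (i : s) (ω : Ω), 0 ≤ ρ i ω := fun i ω => ρ.nonneg i ω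
  have hsupp : ∀ (i : s) (ω : Ω), ρ i ω ≠ 0 → ω ∈ U ↑i := fun i ω h =>
    hρ i (subset_tsupport _ h)
  -- the 𝕜-valued partition functions
  set ψ : s → C(Ω, 𝕜) := fun i =>
    ⟨fun ω => ((ρ i ω : ℝ) : 𝕜), RCLike.continuous_ofReal.comp (ρ i).continuous⟩ with hψ
  -- the averaging operator
  set Tlin : (BSigma Ω 𝕜) →ₗ[𝕜] C(Ω, 𝕜) :=
    { toFun := fun w => ∑ i : s, ((↑w : lp (fun _ : Ω => 𝕜) ∞) ↑i) • ψ i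
      map_add' := by
        intro w w'
        simp only [Submodule.coe_add, lp.coeFn_add, Pi.add_apply, add_smul,
          Finset.sum_add_distrib]
      map_smul' := by
        intro c w
        simp only [Submodule.coe_smul, lp.coeFn_smul, Pi.smul_apply, RingHom.id_apply,
          smul_eq_mul, mul_smul, Finset.smul_sum] } with hTlin
  have hval : ∀ (w : BSigma Ω 𝕜) (ω : Ω),
      (Tlin w) ω = ∑ i : s, ((↑w : lp (fun _ : Ω => 𝕜) ∞) ↑i) * ((ρ i ω : ℝ) : 𝕜) := by
    intro w ω
    simp only [hTlin, LinearMap.coe_mk, AddHom.coe_mk]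
    rw [ContinuousMap.coe_sum]
    simp [hψ, smul_eq_mul]
  have happly : ∀ (w : BSigma Ω 𝕜) (i : Ω), ‖(↑w : lp (fun _ : Ω => 𝕜) ∞) i‖ ≤ ‖w‖ :=
    fun w i => by
      rw [Submodule.coe_norm]
      exact lp.norm_apply_le_norm ENNReal.top_ne_zero (w : lp (fun _ : Ω => 𝕜) ∞) i
  have hbound : ∀ w : BSigma Ω 𝕜, ‖Tlin w‖ ≤ 1 * ‖w‖ := by
    intro w
    rw [one_mul]
    refine (ContinuousMap.norm_le _ (norm_nonneg w)).2 fun ω => ?_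
    rw [hval]
    refine le_trans (norm_sum_le _ _) ?_
    have : ∀ i : s, ‖((↑w : lp (fun _ : Ω => 𝕜) ∞) ↑i) * ((ρ i ω : ℝ) : 𝕜)‖ ≤ ‖w‖ * ρ i ω := by
      intro i
      rw [norm_mul]
      have h1 : ‖(((ρ i ω : ℝ)) : 𝕜)‖ = ρ i ω := by
        rw [RCLike.norm_ofReal, abs_of_nonneg (hnn i ω)]
      rw [h1]
      exact mul_le_mul_of_nonneg_right (happly w ↑i) (hnn i ω)
    refine le_trans (Finset.sum_le_sum fun i _ => this i) ?_
    rw [← Finset.mul_sum, hsum, mul_one]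
  refine ⟨Tlin.mkContinuous 1 hbound, LinearMap.mkContinuous_norm_le _ zero_le_one _, ?_⟩
  intro w j hw
  refine (ContinuousMap.norm_le _ hη.le).2 fun ω => ?_
  have hTw : (Tlin.mkContinuous 1 hbound w) ω = ∑ i : s, (z j ↑i) * ((ρ i ω : ℝ) : 𝕜) := by
    rw [LinearMap.mkContinuous_apply, hval]
    refine Finset.sum_congr rfl fun i _ => by rw [hw]
  have hzω : (z j ω : 𝕜) = ∑ i : s, (z j ω) * ((ρ i ω : ℝ) : 𝕜) := by
    rw [← Finset.mul_sum]
    have : (∑ i : s, ((ρ i ω : ℝ) : 𝕜)) = ((∑ i : s, ρ i ω : ℝ) : 𝕜) := by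
      norm_cast
    rw [this, hsum, RCLike.ofReal_one, mul_one]
  have hdiff : (Tlin.mkContinuous 1 hbound w - z j) ω
      = ∑ i : s, ((z j ↑i - z j ω) * ((ρ i ω : ℝ) : 𝕜)) := by
    rw [ContinuousMap.sub_apply, hTw]
    conv_lhs => rw [hzω]
    rw [← Finset.sum_sub_distrib]
    refine Finset.sum_congr rfl fun i _ => by ring
  rw [hdiff]
  refine le_trans (norm_sum_le _ _) ?_
  have hterm : ∀ i : s, ‖(z j ↑i - z j ω) * ((ρ i ω : ℝ) : 𝕜)‖ ≤ (η / 2) * ρ i ω := by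
    intro i
    rcases eq_or_ne (ρ i ω) 0 with h0 | h0
    · simp [h0]
    · rw [norm_mul, RCLike.norm_ofReal, abs_of_nonneg (hnn i ω)]
      refine mul_le_mul_of_nonneg_right ?_ (hnn i ω)
      have hmem := hsupp i ω h0
      have : ‖z j ω - z j ↑i‖ < η / 2 := hmem j
      rw [norm_sub_rev] at this
      exact this.le
  refine le_trans (Finset.sum_le_sum fun i _ => hterm i) ?_
  rw [← Finset.mul_sum, hsum, mul_one]
  linarith

end AuxT
open scoped TensorProduct in
set_option maxHeartbeats 2000000 in
set_option synthInstance.maxHeartbeats 1000000 in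
/-- `C_p(Ω,X) = C(Ω) ⊗̂_{d_p} X` is isometrically a subspace of `B(Σ) ⊗̂_{d_p} X`: the canonical
inclusion `ι : C(Ω) → B(Σ)` induces a `d_p`-isometry of `C(Ω) ⊗ X` into `B(Σ) ⊗ X`. -/
theorem statement15 {Ω 𝕜 X : Type*} [TopologicalSpace Ω] [CompactSpace Ω] [T2Space Ω] [MeasurableSpace Ω] [BorelSpace Ω] [RCLike 𝕜]
    [NormedAddCommGroup X] [NormedSpace 𝕜 X]
    (p p' : ℝ≥0∞) (hp : 1 ≤ p) (hpp' : p⁻¹ + p'⁻¹ = 1)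
    (ι : C(Ω, 𝕜) →ₗ[𝕜] BSigma Ω 𝕜)
    (hι : ∀ (φ : C(Ω, 𝕜)) (ω : Ω), (↑(ι φ) : lp (fun _ : Ω => 𝕜) ∞) ω = φ ω)
    (u : C(Ω, 𝕜) ⊗[𝕜] X) :
    dpNorm 𝕜 p p' (TensorProduct.map ι (LinearMap.id (R := 𝕜) (M := X)) u) =
      dpNorm 𝕜 p p' u := by
  classical
  have hp'1 : 1 ≤ p' := by
    rw [← ENNReal.inv_le_one]
    calc p'⁻¹ ≤ p⁻¹ + p'⁻¹ := le_add_self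
      _ = 1 := hpp'
  have hιbound : ∀ φ : C(Ω, 𝕜), ‖ι φ‖ ≤ 1 * ‖φ‖ := by
    intro φ
    rw [one_mul, Submodule.coe_norm]
    exact lp.norm_le_of_forall_le (norm_nonneg φ) fun ω => by
      rw [hι]; exact φ.norm_coe_le_norm ω
  set ιC : C(Ω, 𝕜) →L[𝕜] BSigma Ω 𝕜 := ι.mkContinuous 1 hιbound with hιC
  have hιCnorm : ‖ιC‖ ≤ 1 := LinearMap.mkContinuous_norm_le _ zero_le_one _
  have hιinj : Function.Injective ι := by
    intro φ φ' h
    ext ω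
    have h2 := congrArg (fun w : BSigma Ω 𝕜 => (↑w : lp (fun _ : Ω => 𝕜) ∞) ω) h
    simpa [hι] using h2
  refine le_antisymm ?_ ?_
  · -- easy direction
    refine le_iInf fun n => le_iInf fun z => le_iInf fun x => le_iInf fun hrep => ?_
    have hrep' : TensorProduct.map ι (LinearMap.id (R := 𝕜) (M := X)) u
        = ∑ i, (ιC (z i)) ⊗ₜ[𝕜] x i := by
      rw [hrep, map_sum]
      exact Finset.sum_congr rfl fun i _ => by
        rw [TensorProduct.map_tmul]; rfl
    refine le_trans (dpNorm_le_rep hrep') ?_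
    exact mul_le_mul_left (weakNorm_comp_le ιC hιCnorm z) _
  · -- hard direction
    refine le_iInf fun n => le_iInf fun w => le_iInf fun x => le_iInf fun hrep => ?_
    have hrtensor : Function.Injective
        (TensorProduct.map ι (LinearMap.id (R := 𝕜) (M := X))) :=
      Module.Flat.rTensor_preserves_injective_linearMap (M := X) ι hιinj
    by_cases hW0 : weakNorm 𝕜 p' w = 0
    · have hw0 : ∀ i, w i = 0 := weakNorm_eq_zero hp'1 hW0
      have h0 : TensorProduct.map ι (LinearMap.id (R := 𝕜) (M := X)) u = 0 := by
        rw [hrep]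
        exact Finset.sum_eq_zero fun i _ => by rw [hw0 i, TensorProduct.zero_tmul]
      have hu : u = 0 := hrtensor (by rw [h0, map_zero])
      rw [hu]
      exact le_trans (dpNorm_zero_le hp) (zero_le)
    by_cases hL0 : lpNorm p x = 0
    · have hx0 : ∀ i, x i = 0 := lpNorm_eq_zero hp hL0
      have h0 : TensorProduct.map ι (LinearMap.id (R := 𝕜) (M := X)) u = 0 := by
        rw [hrep]
        exact Finset.sum_eq_zero fun i _ => by rw [hx0 i, TensorProduct.tmul_zero]
      have hu : u = 0 := hrtensor (by rw [h0, map_zero])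
      rw [hu]
      exact le_trans (dpNorm_zero_le hp) (zero_le)
    by_cases hWt : weakNorm 𝕜 p' w = ⊤
    · rw [hWt, ENNReal.top_mul hL0]; exact le_top
    by_cases hLt : lpNorm p x = ⊤
    · rw [hLt, ENNReal.mul_top hW0]; exact le_top
    -- main case
    set W := weakNorm 𝕜 p' w with hWdef
    set L := lpNorm p x with hLdef
    obtain ⟨k, z, y, hzy⟩ := exists_fin_rep u
    have claim : ∀ δ : ℝ≥0∞, 0 < δ → δ ≠ ⊤ → dpNorm 𝕜 p p' u ≤ (W + δ) * (L + δ) := by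
      intro δ hδ0 hδt
      set S : ℝ≥0∞ := ∑ j, (‖y j‖₊ : ℝ≥0∞) with hSdef
      have hSt : S ≠ ⊤ := by
        rw [hSdef]
        exact (ENNReal.sum_lt_top.2 fun _ _ => ENNReal.coe_lt_top).ne
      have hS1 : S + 1 ≠ 0 := by simp
      have hS1t : S + 1 ≠ ⊤ := by simp [hSt]
      set τ : ℝ≥0∞ := min 1 (δ / (S + 1)) with hτdef
      have hτ0 : τ ≠ 0 := (lt_min one_pos (ENNReal.div_pos hδ0.ne' hS1t)).ne'
      have hτt : τ ≠ ⊤ := (lt_of_le_of_lt (min_le_left _ _) ENNReal.one_lt_top).ne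
      have hτS : τ * S ≤ δ := by
        calc τ * S ≤ (δ / (S + 1)) * (S + 1) :=
              mul_le_mul' (min_le_right _ _) le_self_add
          _ = δ := ENNReal.div_mul_cancel hS1 hS1t
      set t : ℝ := τ.toReal with htdef
      have ht0 : 0 < t := ENNReal.toReal_pos hτ0 hτt
      set tk : 𝕜 := ((t : ℝ) : 𝕜) with htkdef
      have htk0 : tk ≠ 0 := by
        rw [htkdef]
        exact_mod_cast RCLike.ofReal_ne_zero.2 ht0.ne'
      have htknorm : ‖tk‖ = t := by
        rw [htkdef, RCLike.norm_ofReal, abs_of_pos ht0]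
      have htknn : (‖tk‖₊ : ℝ≥0∞) = τ := by
        rw [← enorm_eq_nnnorm, ← ofReal_norm, htknorm, htdef, ENNReal.ofReal_toReal hτt]
      have hk1 : ((k : ℝ≥0∞) + 1) ≠ 0 := by simp
      have hk1t : ((k : ℝ≥0∞) + 1) ≠ ⊤ := by simp
      set ν : ℝ≥0∞ := min 1 (δ / ((k : ℝ≥0∞) + 1)) with hνdef
      have hν0 : ν ≠ 0 := (lt_min one_pos (ENNReal.div_pos hδ0.ne' hk1t)).ne'
      have hνt : ν ≠ ⊤ := (lt_of_le_of_lt (min_le_left _ _) ENNReal.one_lt_top).ne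
      have hνk : (k : ℝ≥0∞) * ν ≤ δ := by
        calc (k : ℝ≥0∞) * ν ≤ ((k : ℝ≥0∞) + 1) * (δ / ((k : ℝ≥0∞) + 1)) :=
              mul_le_mul' le_self_add (min_le_right _ _)
          _ = δ := ENNReal.mul_div_cancel hk1 hk1t
      set d : ℝ := ν.toReal with hddef
      have hd0 : 0 < d := ENNReal.toReal_pos hν0 hνt
      obtain ⟨T, hT1, hTz⟩ := exists_average_op z (mul_pos ht0 hd0)
      set c1 : Fin n → C(Ω, 𝕜) := fun i => T (w i) with hc1def
      set c2 : Fin k → C(Ω, 𝕜) := fun j => tk⁻¹ • (z j - T (ι (z j))) with hc2def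
      set v2 : Fin k → X := fun j => tk • y j with hv2def
      have key : ∑ j, (T (ι (z j))) ⊗ₜ[𝕜] y j = ∑ i, (T (w i)) ⊗ₜ[𝕜] x i := by
        have h2 := congrArg
          (LinearMap.rTensor X (T : BSigma Ω 𝕜 →ₗ[𝕜] C(Ω, 𝕜))) hrep
        rw [hzy] at h2
        simp only [map_sum, TensorProduct.map_tmul, LinearMap.rTensor_tmul,
          LinearMap.id_coe, id_eq, ContinuousLinearMap.coe_coe] at h2
        exact h2
      have hrep2 : u = ∑ i2 : Fin (n + k),
          (Fin.append c1 c2 i2) ⊗ₜ[𝕜] (Fin.append x v2 i2) := by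
        rw [Fin.sum_univ_add]
        simp only [Fin.append_left, Fin.append_right]
        have h2 : ∀ j, (c2 j) ⊗ₜ[𝕜] (v2 j)
            = (z j) ⊗ₜ[𝕜] y j - (T (ι (z j))) ⊗ₜ[𝕜] y j := by
          intro j
          rw [hc2def, hv2def]
          simp only
          rw [TensorProduct.tmul_smul, ← TensorProduct.smul_tmul', smul_smul,
            mul_inv_cancel₀ htk0, one_smul, TensorProduct.sub_tmul]
        rw [Finset.sum_congr rfl fun j _ => h2 j, Finset.sum_sub_distrib, key, hzy]
        abel
      refine le_trans (dpNorm_le_rep hrep2) (mul_le_mul' ?_ ?_)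
      · -- weak norm bound
        refine le_trans (weakNorm_append_le hp'1 c1 c2) (add_le_add ?_ ?_)
        · exact weakNorm_comp_le T hT1 w
        · refine le_trans (weakNorm_le_sum hp'1 c2) ?_
          have hterm : ∀ j, (‖c2 j‖₊ : ℝ≥0∞) ≤ ν := by
            intro j
            have hnc2 : ‖c2 j‖ ≤ d := by
              rw [hc2def]
              simp only
              rw [norm_smul, norm_inv, htknorm]
              have h3 : ‖z j - T (ι (z j))‖ ≤ t * d := by
                rw [norm_sub_rev]
                exact hTz (ι (z j)) j (hι (z j))
              calc t⁻¹ * ‖z j - T (ι (z j))‖ ≤ t⁻¹ * (t * d) :=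
                    mul_le_mul_of_nonneg_left h3 (by positivity)
                _ = d := by field_simp
            calc (‖c2 j‖₊ : ℝ≥0∞) = ENNReal.ofReal ‖c2 j‖ :=
                  (ofReal_norm _).symm
              _ ≤ ENNReal.ofReal d := ENNReal.ofReal_le_ofReal hnc2
              _ = ν := by rw [hddef, ENNReal.ofReal_toReal hνt]
          calc ∑ j, (‖c2 j‖₊ : ℝ≥0∞) ≤ ∑ _j : Fin k, ν :=
                Finset.sum_le_sum fun j _ => hterm j
            _ = (k : ℝ≥0∞) * ν := by
                rw [Finset.sum_const, Finset.card_univ, Fintype.card_fin, nsmul_eq_mul]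
            _ ≤ δ := hνk
      · -- lp norm bound
        refine le_trans (lpNorm_append_le hp x v2) (add_le_add le_rfl ?_)
        refine le_trans (lpNorm_le_sum hp v2) ?_
        have hterm : ∀ j, (‖v2 j‖₊ : ℝ≥0∞) = τ * (‖y j‖₊ : ℝ≥0∞) := by
          intro j
          rw [hv2def]
          simp only
          rw [nnnorm_smul, ENNReal.coe_mul, htknn]
        calc ∑ j, (‖v2 j‖₊ : ℝ≥0∞) = τ * S := by
              rw [hSdef, Finset.mul_sum]
              exact Finset.sum_congr rfl fun j _ => hterm j
          _ ≤ δ := hτS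
    -- conclude from the claim by letting δ → 0
    refine ENNReal.le_of_forall_pos_le_add fun ε hε _ => ?_
    set C : ℝ≥0∞ := W + L + 1 with hCdef
    have hCt : C ≠ ⊤ := by
      rw [hCdef]
      exact ENNReal.add_ne_top.2 ⟨ENNReal.add_ne_top.2 ⟨hWt, hLt⟩, ENNReal.one_ne_top⟩
    have hε0 : ((ε : ℝ≥0∞)) ≠ 0 := ENNReal.coe_ne_zero.2 hε.ne'
    set δ : ℝ≥0∞ := min 1 ((ε : ℝ≥0∞) / C) with hδdef
    have hδ0 : 0 < δ := lt_min one_pos (ENNReal.div_pos hε0 hCt)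
    have hδ1 : δ ≤ 1 := min_le_left _ _
    have hδt : δ ≠ ⊤ := (lt_of_le_of_lt hδ1 ENNReal.one_lt_top).ne
    refine le_trans (claim δ hδ0 hδt) ?_
    have expand : (W + δ) * (L + δ) ≤ W * L + δ * C := by
      have h1 : (W + δ) * (L + δ) = W * L + (δ * W + δ * L + δ * δ) := by ring
      rw [h1]
      refine add_le_add le_rfl ?_
      calc δ * W + δ * L + δ * δ ≤ δ * W + δ * L + δ * 1 := by
            exact add_le_add le_rfl (mul_le_mul' le_rfl hδ1)
        _ = δ * C := by rw [hCdef]; ring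
    refine le_trans expand (add_le_add le_rfl ?_)
    have hC0 : C ≠ 0 := by
      rw [hCdef]
      simp
    calc δ * C ≤ ((ε : ℝ≥0∞) / C) * C := mul_le_mul' (min_le_right _ _) le_rfl
      _ = (ε : ℝ≥0∞) := ENNReal.div_mul_cancel hC0 hCt

end Paper
end
end
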